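/- Let T be a noncrossing tree on [n] containing the edge {i,k} with i < k, and let s(T) be its signature. Then for every j with i < j < k, s_j ≥ s_i. Moreover, if the unique path from j to k in T does not contain i, then s_j ≥ s_i + 1. -/

import Mathlib

attribute [local instance 2000] Classical.propDecidable

/-- A graph on `Fin n` is noncrossing if it has no pair of edges `{a,c}` and `{b,d}`
with `a < b < c < d`. -/
def Noncrossing {n : ℕ} (G : SimpleGraph (Fin n)) : Prop :=
  ∀ a b c d : Fin n, a < b → b < c → c < d → G.Adj a c → G.Adj b d → False

/-- The signature of a noncrossing tree on `Fin n` (vertices `0, 1, ..., n-1`):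
`s 0 = 1`; and for `i > 0`, `s i = s j` where `j < i` is minimal with `{j,i}` an edge,
if such a `j` exists, and otherwise `s i = s (i-1) + 1`. -/
noncomputable def signature {n : ℕ} (T : SimpleGraph (Fin n)) : ℕ → ℕ
  | 0 => 1
  | (i+1) =>
    if h : ∃ j, j ≤ i ∧ ∃ (h1 : j < n) (h2 : i + 1 < n), T.Adj ⟨j, h1⟩ ⟨i + 1, h2⟩ then
      signature T (Nat.find h)
    else
      signature T i + 1
termination_by i => i
decreasing_by
  · exact Nat.lt_succ_of_le (Nat.find_spec h).1
  · exact Nat.lt_succ_self i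

/-- If `{i,k}` with `i < k` is an edge of a noncrossing tree `T`, then `s j ≥ s i` for all
`i < j < k`; moreover if the unique path from `j` to `k` in `T` does not contain `i`,
then `s j ≥ s i + 1`. -/
theorem signature_ge_of_edge {n : ℕ} (T : SimpleGraph (Fin n))
    (hT : T.IsTree) (hnc : Noncrossing T) (i k : Fin n) (hik : i < k) (hadj : T.Adj i k) :
    ∀ j : Fin n, i < j → j < k →
      (signature T i.val ≤ signature T j.val) ∧
      (∀ p : T.Walk j k, p.IsPath → i ∉ p.support →
        signature T i.val + 1 ≤ signature T j.val) := by
  have uniq : ∀ {a b : Fin n} (p q : T.Walk a b), p.IsPath → q.IsPath → p = q := by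
    intro a b p q hp hq
    have := SimpleGraph.isAcyclic_iff_path_unique.mp hT.IsAcyclic ⟨p, hp⟩ ⟨q, hq⟩
    exact congrArg Subtype.val this
  have main : ∀ v : ℕ, ∀ j : Fin n, j.val = v → i < j → j < k →
      (signature T i.val ≤ signature T j.val) ∧
      (∀ p : T.Walk j k, p.IsPath → i ∉ p.support →
        signature T i.val + 1 ≤ signature T j.val) := by
    intro v
    induction v using Nat.strong_induction_on with
    | _ v IH =>
      intro j hv hij hjk
      have hijv : (i : ℕ) < (j : ℕ) := hij
      have hjkv : (j : ℕ) < (k : ℕ) := hjk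
      obtain ⟨w, hw⟩ : ∃ w, v = w + 1 := ⟨v - 1, (Nat.sub_add_cancel (by linarith : 1 ≤ v)).symm⟩
      subst hw
      have hjval : (j : ℕ) = w + 1 := hv
      by_cases h : ∃ m, m ≤ w ∧ ∃ (h1 : m < n) (h2 : w + 1 < n),
          T.Adj ⟨m, h1⟩ ⟨w + 1, h2⟩
      ·
        have hsig : signature T (j : ℕ) = signature T (Nat.find h) := by
          rw [hjval, signature, dif_pos h]
        obtain ⟨hmw, h1, h2, hadjm⟩ := Nat.find_spec h
        set m := Nat.find h with hm
        have hjeq : (⟨w + 1, h2⟩ : Fin n) = j := by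
          apply Fin.ext; simp [hjval]
        rw [hjeq] at hadjm
        rcases lt_trichotomy m (i : ℕ) with hmi | hmi | hmi
        · exact absurd (hnc ⟨m, h1⟩ i j k hmi hij hjk hadjm hadj) (by simp)
        · have hieq : (⟨m, h1⟩ : Fin n) = i := by apply Fin.ext; simp [hmi]
          have hsig' : signature T (j : ℕ) = signature T (i : ℕ) := by
            rw [hsig, hmi]
          constructor
          · rw [hsig']
          · intro p hp hpi
            exfalso
            rw [hieq] at hadjm
            have hq : (SimpleGraph.Walk.cons hadjm.symm
                (SimpleGraph.Walk.cons hadj SimpleGraph.Walk.nil)).IsPath := by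
              simp [SimpleGraph.Walk.isPath_def]
              exact ⟨⟨hij.ne', hjk.ne⟩, hik.ne⟩
            have := uniq p _ hp hq
            apply hpi
            rw [this]
            simp
        · have hlt : m < w + 1 := Nat.lt_succ_of_le hmw
          have hihm := IH m hlt ⟨m, h1⟩ rfl hmi (by
            show m < (k : ℕ); linarith)
          constructor
          · rw [hsig]; exact hihm.1
          · intro p hp hpi
            have hq := (SimpleGraph.Walk.cons hadjm p).bypass_isPath
            have hiq : i ∉ (SimpleGraph.Walk.cons hadjm p).bypass.support := by
              intro hc
              have := SimpleGraph.Walk.support_bypass_subset _ hc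
              rw [SimpleGraph.Walk.support_cons] at this
              rcases List.mem_cons.mp this with h' | h'
              · exact absurd (congrArg Fin.val h') (ne_of_lt hmi)
              · exact hpi h'
            rw [hsig]
            exact hihm.2 _ hq hiq
      ·
        have hsig : signature T (j : ℕ) = signature T w + 1 := by
          rw [hjval, signature, dif_neg h]
        have hiw : (i : ℕ) ≤ w := by linarith
        rcases eq_or_lt_of_le hiw with hiw' | hiw'
        · rw [hsig, ← hiw']
          exact ⟨Nat.le_succ _, fun _ _ _ => le_refl _⟩
        · have hwn : w < n := by have := k.isLt; linarith
          have hihw := IH w (Nat.lt_succ_self w) ⟨w, hwn⟩ rfl hiw' (by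
            show w < (k : ℕ); linarith)
          have h1 : signature T (i : ℕ) ≤ signature T w := hihw.1
          rw [hsig]
          exact ⟨by linarith, fun _ _ _ => by linarith⟩
  intro j hij hjk
  exact main j.val j rfl hij hjk
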